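/- arXiv:2602.09470 — 3 statements merged into one kernel-verified Lean document; each statement's English description precedes it below -/
import Mathlib

section
/- (Erdős–Rado, n = 1 case) For every infinite cardinal κ, (2^κ)^+ → (κ^+)²_κ: for every function f from the 2-element subsets of a set X of cardinality (2^κ)^+ to a set of colors of cardinality κ, there exists a subset H ⊆ X of cardinality κ^+ such that f is constant on the 2-element subsets of H. -/
universe u

open Cardinal

theorem stmt_7 (κ : Cardinal.{u}) (hκ : Cardinal.aleph0 ≤ κ)
    (X C : Type u) (hX : Cardinal.mk X = Order.succ (2 ^ κ)) (hC : Cardinal.mk C = κ)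
    (f : {s : Finset X // s.card = 2} → C) :
    ∃ H : Set X, Cardinal.mk H = Order.succ κ ∧
      ∃ c : C, ∀ s : {s : Finset X // s.card = 2}, ↑s.1 ⊆ H → f s = c := by
  classical
  have hCne : Nonempty C := Cardinal.mk_ne_zero_iff.mp
    (by rw [hC]; exact (Cardinal.aleph0_pos.trans_le hκ).ne')
  have hXne : Nonempty X := Cardinal.mk_ne_zero_iff.mp
    (by rw [hX]; exact (Cardinal.aleph0_pos.trans_le
      (hκ.trans ((Cardinal.cantor κ).le.trans (Order.le_succ _)))).ne')
  obtain ⟨xs⟩ := hXne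
  -- the pair coloring as a two-argument function
  obtain ⟨p, hp⟩ : ∃ p : X → X → C, ∀ (x y : X) (h : x ≠ y),
      p x y = f ⟨{x, y}, Finset.card_pair h⟩ :=
    ⟨fun x y => if h : x ≠ y then f ⟨{x, y}, Finset.card_pair h⟩ else Classical.choice hCne,
      fun x y h => dif_pos h⟩
  have psymm : ∀ (x y : X), x ≠ y → p x y = p y x := by
    intro x y h
    rw [hp x y h, hp y x h.symm]
    exact congrArg f (Subtype.ext (Finset.pair_comm x y))
  have hfp : ∀ (s : {s : Finset X // s.card = 2}) (x y : X) (h : x ≠ y),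
      s.1 = {x, y} → f s = p x y := by
    intro s x y h hs
    rw [hp x y h]
    exact congrArg f (Subtype.ext hs)
  -- an index type of size κ
  obtain ⟨ι, hι, hιne⟩ : ∃ ι : Type u, #ι = κ ∧ Nonempty ι :=
    ⟨κ.out, Cardinal.mk_out κ, Cardinal.mk_ne_zero_iff.mp
      (by rw [Cardinal.mk_out]; exact (Cardinal.aleph0_pos.trans_le hκ).ne')⟩
  -- witness function
  obtain ⟨w, hw⟩ : ∃ w : (ι → X) → (ι → C) → X, ∀ s t,
      (∃ y, y ∉ Set.range s ∧ ∀ i, p y (s i) = t i) →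
      w s t ∉ Set.range s ∧ ∀ i, p (w s t) (s i) = t i :=
    ⟨fun s t => if h : ∃ y, y ∉ Set.range s ∧ ∀ i, p y (s i) = t i then h.choose else xs,
      fun s t h => by dsimp only; rw [dif_pos h]; exact h.choose_spec⟩
  -- the well-order of type κ⁺
  set W : Type u := (Order.succ κ).ord.ToType with hWdef
  haveI hiwo : IsWellOrder W (· < ·) :=
    isWellOrder_lt
  have hwf : WellFounded ((· < ·) : W → W → Prop) := IsWellFounded.wf
  have hWcard : #W = Order.succ κ := by rw [Cardinal.mk_toType, Cardinal.card_ord]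
  have hWne : Nonempty W := by
    rw [Ordinal.toType_nonempty_iff_ne_zero]
    intro h
    have : (0 : Ordinal) < (Order.succ κ).ord := by
      rw [Cardinal.lt_ord, Ordinal.card_zero]
      exact (Cardinal.zero_le κ).trans_lt (Order.lt_succ κ)
    exact this.ne' h
  -- basic cardinal facts
  have h2κ : ℵ₀ ≤ 2 ^ κ := hκ.trans (Cardinal.cantor κ).le
  have hκ2 : κ ≤ 2 ^ κ := (Cardinal.cantor κ).le
  have hsκ2 : Order.succ κ ≤ 2 ^ κ := Order.succ_le_of_lt (Cardinal.cantor κ)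
  have h22 : (2 ^ κ : Cardinal) * (2 ^ κ : Cardinal) ≤ (2 ^ κ : Cardinal) := by
    rw [← Cardinal.power_add, Cardinal.add_eq_self hκ]
  -- initial segments of W are small
  have hIio : ∀ o : W, #(Set.Iio o) ≤ κ := by
    intro o
    have h1 : #(Set.Iio o) = (Ordinal.typein ((· < ·) : W → W → Prop) o).card :=
      Ordinal.card_typein (r := ((· < ·) : W → W → Prop)) o
    rw [h1]
    exact Order.lt_succ_iff.mp (Cardinal.lt_ord.mp (Ordinal.typein_lt_self o))
  -- the closure chain
  obtain ⟨g, hg⟩ : ∃ g : W → Set X, ∀ o : W, g o =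
      insert xs ((⋃ β : Set.Iio o, g ↑β) ∪ Set.range
        (fun q : {s : ι → X // Set.range s ⊆ ⋃ β : Set.Iio o, g ↑β} × (ι → C) =>
          w q.1.1 q.2)) :=
    ⟨hwf.fix (fun o ih => insert xs ((⋃ β : Set.Iio o, ih ↑β β.2) ∪ Set.range
        (fun q : {s : ι → X // Set.range s ⊆ ⋃ β : Set.Iio o, ih ↑β β.2} × (ι → C) =>
          w q.1.1 q.2))),
      fun o => hwf.fix_eq _ o⟩
  have hxsg : ∀ o : W, xs ∈ g o := fun o => by rw [hg o]; exact Set.mem_insert _ _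
  set A : Set X := ⋃ o : W, g o with hAdef
  have hwmem : ∀ (o : W) (s : ι → X) (t : ι → C),
      Set.range s ⊆ (⋃ β : Set.Iio o, g ↑β) → w s t ∈ g o := by
    intro o s t hs
    rw [hg o]
    exact Set.mem_insert_of_mem _ (Or.inr ⟨(⟨s, hs⟩, t), rfl⟩)
  -- cardinality of the chain
  have hgcard : ∀ o : W, #(g o) ≤ 2 ^ κ := by
    intro o
    refine hwf.induction (C := fun o => #(g o) ≤ 2 ^ κ) o (fun o ih => ?_)
    show #(g o) ≤ 2 ^ κ
    have hU : #(⋃ β : Set.Iio o, g ↑β) ≤ 2 ^ κ := by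
      refine (Cardinal.mk_iUnion_le _).trans ?_
      have hsup : (⨆ β : Set.Iio o, #(g ↑β)) ≤ 2 ^ κ := by
        rcases isEmpty_or_nonempty (Set.Iio o) with he | hne
        · rw [ciSup_of_empty]
          exact Cardinal.zero_le _
        · exact ciSup_le' (fun β => ih ↑β β.2)
      calc #(Set.Iio o) * ⨆ β : Set.Iio o, #(g ↑β) ≤ (2 ^ κ) * (2 ^ κ) :=
            mul_le_mul' ((hIio o).trans hκ2) hsup
        _ ≤ 2 ^ κ := h22
    have hsub : #{s : ι → X // Set.range s ⊆ ⋃ β : Set.Iio o, g ↑β} ≤ 2 ^ κ := by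
      refine le_trans (Cardinal.mk_le_of_injective
        (f := fun q i => (⟨q.1 i, q.2 ⟨i, rfl⟩⟩ : ↥(⋃ β : Set.Iio o, g ↑β))) ?_) ?_
      · intro q q' h
        exact Subtype.ext (funext fun i => congrArg Subtype.val (congrFun h i))
      · rw [← Cardinal.power_def, hι]
        calc #(⋃ β : Set.Iio o, g ↑β) ^ κ ≤ (2 ^ κ) ^ κ :=
              Cardinal.power_le_power_right hU
          _ = 2 ^ (κ * κ) := Cardinal.power_mul.symm
          _ = 2 ^ κ := by rw [Cardinal.mul_eq_self hκ]
    have hC2 : #(ι → C) ≤ 2 ^ κ := by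
      rw [← Cardinal.power_def, hC, hι, Cardinal.power_self_eq hκ]
    have hrange : #(Set.range (fun q : {s : ι → X //
        Set.range s ⊆ ⋃ β : Set.Iio o, g ↑β} × (ι → C) => w q.1.1 q.2)) ≤ 2 ^ κ := by
      refine Cardinal.mk_range_le.trans ?_
      rw [Cardinal.mk_prod, Cardinal.lift_id, Cardinal.lift_id]
      exact (mul_le_mul' hsub hC2).trans h22
    rw [hg o]
    refine Cardinal.mk_insert_le.trans ?_
    refine le_trans (add_le_add_left (Cardinal.mk_union_le _ _) 1) ?_
    have h1 : (1 : Cardinal) ≤ 2 ^ κ := le_trans (le_of_lt Cardinal.one_lt_aleph0) h2κ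
    calc #(⋃ β : Set.Iio o, g ↑β) + #(Set.range _) + 1 ≤ (2 ^ κ + 2 ^ κ) + 2 ^ κ :=
          add_le_add (add_le_add hU hrange) h1
      _ = 2 ^ κ := by rw [Cardinal.add_eq_self h2κ, Cardinal.add_eq_self h2κ]
  -- the closure set is small
  have hA : #A ≤ 2 ^ κ := by
    refine (Cardinal.mk_iUnion_le _).trans ?_
    have hsup : (⨆ o : W, #(g o)) ≤ 2 ^ κ := ciSup_le' hgcard
    calc #W * ⨆ o : W, #(g o) ≤ (2 ^ κ) * (2 ^ κ) :=
          mul_le_mul' (by rw [hWcard]; exact hsκ2) hsup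
      _ ≤ 2 ^ κ := h22
  -- pick a point outside A
  have hx₀ : ∃ x₀ : X, x₀ ∉ A := by
    by_contra h
    push_neg at h
    have : A = Set.univ := Set.eq_univ_of_forall h
    have h2 : #A = Order.succ (2 ^ κ) := by rw [this, Cardinal.mk_univ, hX]
    rw [h2] at hA
    exact (Order.lt_succ (2 ^ κ)).not_ge hA
  obtain ⟨x₀, hx₀⟩ := hx₀
  -- the main transfinite recursion
  obtain ⟨a, ha⟩ : ∃ a : W → X, ∀ o : W, a o =
      if h : ∃ s : ι → X, Set.range s = {x | ∃ β, ∃ _ : β < o, a β = x} then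
        w h.choose (fun i => p x₀ (h.choose i)) else xs :=
    ⟨hwf.fix (fun o ih =>
      if h : ∃ s : ι → X, Set.range s = {x | ∃ β, ∃ hb : β < o, ih β hb = x} then
        w h.choose (fun i => p x₀ (h.choose i)) else xs),
      fun o => hwf.fix_eq _ o⟩
  -- the invariant
  have Inv : ∀ o : W, a o ∈ A ∧ ∀ β : W, β < o →
      a o ≠ a β ∧ p (a o) (a β) = p x₀ (a β) := by
    intro o
    refine hwf.induction (C := fun o => a o ∈ A ∧ ∀ β : W, β < o →
      a o ≠ a β ∧ p (a o) (a β) = p x₀ (a β)) o (fun o ih => ?_)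
    show a o ∈ A ∧ ∀ β : W, β < o → a o ≠ a β ∧ p (a o) (a β) = p x₀ (a β)
    by_cases h0 : ∃ β : W, β < o
    · have hprevA : {x | ∃ β, ∃ _ : β < o, a β = x} ⊆ A := by
        rintro x ⟨β, hb, rfl⟩
        exact (ih β hb).1
      have hprevne : ({x | ∃ β, ∃ _ : β < o, a β = x} : Set X).Nonempty := by
        obtain ⟨β, hb⟩ := h0
        exact ⟨a β, β, hb, rfl⟩
      have hprevcard : #({x | ∃ β, ∃ _ : β < o, a β = x} : Set X) ≤ κ := by
        have hss : ({x | ∃ β, ∃ _ : β < o, a β = x} : Set X) ⊆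
            Set.range (fun β : Set.Iio o => a ↑β) := by
          rintro x ⟨β, hb, rfl⟩
          exact ⟨⟨β, hb⟩, rfl⟩
        exact ((Cardinal.mk_le_mk_of_subset hss).trans Cardinal.mk_range_le).trans (hIio o)
      have hex : ∃ s : ι → X, Set.range s = {x | ∃ β, ∃ _ : β < o, a β = x} := by
        haveI := hprevne.to_subtype
        obtain ⟨e⟩ := (Cardinal.le_def _ _).mp (hprevcard.trans_eq hι.symm)
        refine ⟨fun i => ((Function.invFun ⇑e i : ↥({x | ∃ β, ∃ _ : β < o, a β = x} : Set X)) : X), ?_⟩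
        have hsur : Function.Surjective (Function.invFun ⇑e) :=
          Function.invFun_surjective e.injective
        have : (fun i => ((Function.invFun ⇑e i : ↥({x | ∃ β, ∃ _ : β < o, a β = x} : Set X)) : X))
            = Subtype.val ∘ Function.invFun ⇑e := rfl
        rw [this, Set.range_comp, hsur.range_eq, Set.image_univ, Subtype.range_coe]
      rw [ha o, dif_pos hex]
      have hsc : Set.range hex.choose = {x | ∃ β, ∃ _ : β < o, a β = x} := hex.choose_spec
      have hx₀p : x₀ ∉ Set.range hex.choose := by
        rw [hsc]; exact fun hx => hx₀ (hprevA hx)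
      obtain ⟨hw1, hw2⟩ := hw hex.choose (fun i => p x₀ (hex.choose i)) ⟨x₀, hx₀p, fun i => rfl⟩
      constructor
      · -- membership in A
        have hst : ∀ β : Set.Iio o, ∃ γ : W, a ↑β ∈ g γ := by
          intro β
          exact Set.mem_iUnion.mp ((ih ↑β β.2).1)
        choose st hstg using hst
        have hσlt : (⨆ β : Set.Iio o,
            (((Ordinal.ToType.mk (o := (Order.succ κ).ord)).symm (st β) : Set.Iio (Order.succ κ).ord) : Ordinal) + 1)
            < (Order.succ κ).ord := by
          refine Ordinal.iSup_lt_ord ?_ (fun β => ?_)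
          · rw [(Cardinal.isRegular_succ hκ).cof_eq]
            exact (hIio o).trans_lt (Order.lt_succ κ)
          · rw [Ordinal.add_one_eq_succ]
            exact (Cardinal.isSuccLimit_ord (hκ.trans (Order.le_succ κ))).succ_lt
              ((Ordinal.ToType.mk (o := (Order.succ κ).ord)).symm (st β)).2
        have hγs : ∀ β : Set.Iio o, st β <
            (Ordinal.ToType.mk (o := (Order.succ κ).ord)) ⟨_, hσlt⟩ := by
          intro β
          have h1 : (Ordinal.ToType.mk (o := (Order.succ κ).ord)).symm (st β) <
              (Ordinal.ToType.mk (o := (Order.succ κ).ord)).symm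
                ((Ordinal.ToType.mk (o := (Order.succ κ).ord)) ⟨_, hσlt⟩) := by
            rw [OrderIso.symm_apply_apply]
            rw [← Subtype.coe_lt_coe]
            calc (((Ordinal.ToType.mk (o := (Order.succ κ).ord)).symm (st β) : Set.Iio (Order.succ κ).ord) : Ordinal)
                < (((Ordinal.ToType.mk (o := (Order.succ κ).ord)).symm (st β) : Set.Iio (Order.succ κ).ord) : Ordinal) + 1 := by
                  rw [Ordinal.add_one_eq_succ]; exact Order.lt_succ _
              _ ≤ _ := Ordinal.le_iSup
                  (fun β : Set.Iio o => (((Ordinal.ToType.mk (o := (Order.succ κ).ord)).symm (st β) : Set.Iio (Order.succ κ).ord) : Ordinal) + 1) β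
          exact ((Ordinal.ToType.mk (o := (Order.succ κ).ord)).symm.lt_iff_lt).mp h1
        have hpU : Set.range hex.choose ⊆
            ⋃ β : Set.Iio ((Ordinal.ToType.mk (o := (Order.succ κ).ord)) ⟨_, hσlt⟩), g ↑β := by
          rw [hsc]
          rintro x ⟨β, hb, rfl⟩
          exact Set.mem_iUnion.mpr ⟨⟨st ⟨β, hb⟩, hγs ⟨β, hb⟩⟩, hstg ⟨β, hb⟩⟩
        exact Set.mem_iUnion.mpr ⟨_, hwmem _ hex.choose _ hpU⟩
      · intro β hb
        have hβp : a β ∈ Set.range hex.choose := by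
          rw [hsc]; exact ⟨β, hb, rfl⟩
        have hβp' := hβp
        obtain ⟨i, hi⟩ := hβp'
        constructor
        · intro he
          exact hw1 (he ▸ hβp)
        · rw [← hi]
          exact hw2 i
    · have hfalse : ¬∃ s : ι → X, Set.range s = {x | ∃ β, ∃ _ : β < o, a β = x} := by
        rintro ⟨s, hs⟩
        obtain ⟨i⟩ := hιne
        have hmem : s i ∈ Set.range s := ⟨i, rfl⟩
        rw [hs] at hmem
        obtain ⟨β, hb, -⟩ := hmem
        exact h0 ⟨β, hb⟩
      rw [ha o, dif_neg hfalse]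
      exact ⟨Set.mem_iUnion.mpr ⟨o, hxsg o⟩, fun β hb => absurd ⟨β, hb⟩ h0⟩
  -- pigeonhole
  obtain ⟨c, hc⟩ := Cardinal.infinite_pigeonhole_card (fun o : W => p x₀ (a o)) (Order.succ κ)
    (by rw [hWcard]) (hκ.trans (Order.le_succ κ))
    (by rw [hC, (Cardinal.isRegular_succ hκ).cof_eq]; exact Order.lt_succ κ)
  have hainj : Set.InjOn a ((fun o : W => p x₀ (a o)) ⁻¹' {c}) := by
    intro β _ γ _ h
    by_contra hne
    rcases lt_or_gt_of_ne hne with hl | hl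
    · exact ((Inv γ).2 β hl).1 h.symm
    · exact ((Inv β).2 γ hl).1 h
  refine ⟨a '' ((fun o : W => p x₀ (a o)) ⁻¹' {c}), ?_, c, ?_⟩
  · refine (Cardinal.mk_image_eq_of_injOn a _ hainj).trans ?_
    exact le_antisymm ((Cardinal.mk_set_le _).trans_eq hWcard) hc
  · rintro ⟨s2, hs2⟩ hsub
    obtain ⟨x, y, hxy, hsxy⟩ := Finset.card_eq_two.mp hs2
    subst hsxy
    have hx : x ∈ a '' ((fun o : W => p x₀ (a o)) ⁻¹' {c}) :=
      hsub (Finset.mem_coe.mpr (Finset.mem_insert_self x {y}))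
    have hy : y ∈ a '' ((fun o : W => p x₀ (a o)) ⁻¹' {c}) :=
      hsub (Finset.mem_coe.mpr (by simp))
    obtain ⟨β, hβ, rfl⟩ := hx
    obtain ⟨γ, hγ, rfl⟩ := hy
    have hfs : f ⟨{a β, a γ}, hs2⟩ = p (a β) (a γ) := hfp _ _ _ hxy rfl
    have hβγ : β ≠ γ := fun h => hxy (by rw [h])
    rcases hβγ.lt_or_gt with hl | hl
    · exact hfs.trans ((psymm _ _ hxy).trans ((((Inv γ).2 β hl).2).trans hβ))
    · exact hfs.trans ((((Inv β).2 γ hl).2).trans hγ)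
end

section
/- Let Θ be an ordinal with the order topology and let ℙ = {pᵢ : i < 𝔠⁺} where 𝔠⁺ = (2^{ℵ₀})⁺. Then the set Γ = {◇pᵢ : i < 𝔠⁺} ∪ {□(pᵢ → ◇pⱼ) : i < j < 𝔠⁺} is not satisfiable at any point of any topological model based on (Θ, order topology). -/
/-- Modal formulas over a set `P` of propositional variables. -/
inductive Fml (P : Type*) where
  | var (p : P) : Fml P
  | bot : Fml P
  | imp (φ ψ : Fml P) : Fml P
  | dia (φ : Fml P) : Fml P

/-- Negation. -/
def Fml.neg {P : Type*} (φ : Fml P) : Fml P := Fml.imp φ Fml.bot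

/-- The box modality as the dual of the diamond. -/
def Fml.box {P : Type*} (φ : Fml P) : Fml P := (Fml.dia φ.neg).neg

/-- Verum. -/
def Fml.top {P : Type*} : Fml P := Fml.neg Fml.bot

/-- Topological semantics: the set of points of a topological model where a
formula holds; `◇φ` is interpreted by the derived-set operator. -/
def tsat {P X : Type*} [TopologicalSpace X] (V : P → Set X) : Fml P → Set X
  | Fml.var p => V p
  | Fml.bot => ∅
  | Fml.imp φ ψ => (tsat V φ)ᶜ ∪ tsat V ψ
  | Fml.dia φ => derivedSet (tsat V φ)

/-- The order (interval) topology on the set of ordinals below Θ. -/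
def ordTop (Θ : Ordinal) : TopologicalSpace {x : Ordinal // x < Θ} :=
  Preorder.topology {x : Ordinal // x < Θ}

/-- Index set for the propositional variables: the ordinals below 𝔠⁺. -/
def PIdx : Type _ := {i : Ordinal // i < (Order.succ (2 ^ Cardinal.aleph0) : Cardinal).ord}

noncomputable instance : LinearOrder PIdx := by unfold PIdx; infer_instance

/-- Γ = {◇pᵢ : i < 𝔠⁺} ∪ {□(pᵢ → ◇pⱼ) : i < j < 𝔠⁺}. -/
def GammaSet : Set (Fml PIdx) :=
  {φ | ∃ i : PIdx, φ = Fml.dia (Fml.var i)} ∪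
    {φ | ∃ i j : PIdx, i < j ∧ φ = Fml.box (Fml.imp (Fml.var i) (Fml.dia (Fml.var j)))}


section ErdosRado
open Cardinal Set Ordinal

universe u
variable {ι : Type u} [LinearOrder ι] [WellFoundedLT ι]

/-- `memFcol c b a` : `a` belongs to the greedy set `F(b)` for the coloring `c`. -/
def memFcol (c : ι → ι → ℕ) (b : ι) : ι → Prop :=
  WellFounded.fix (wellFounded_lt)
    (fun a ih => a < b ∧ ∀ a' (h : a' < a), ih a' h → c a' a = c a' b)

theorem memFcol_iff (c : ι → ι → ℕ) (b a : ι) :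
    memFcol c b a ↔ a < b ∧ ∀ a' < a, memFcol c b a' → c a' a = c a' b := by
  unfold memFcol
  rw [WellFounded.fix_eq]

theorem memFcol_lt {c : ι → ι → ℕ} {b a : ι} (h : memFcol c b a) : a < b :=
  ((memFcol_iff c b a).1 h).1

theorem memFcol_color {c : ι → ι → ℕ} {b a a' : ι} (h : memFcol c b a)
    (h' : memFcol c b a') (hlt : a' < a) : c a' a = c a' b :=
  ((memFcol_iff c b a).1 h).2 a' hlt h'

variable (c : ι → ι → ℕ)

/-- The order type of the greedy set `F(b)`. -/
noncomputable def tauF (b : ι) : Ordinal.{u} :=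
  Ordinal.type ((· < ·) : ↥{a | memFcol c b a} → ↥{a | memFcol c b a} → Prop)

/-- Enumeration of the greedy set `F(b)`. -/
noncomputable def EF (b : ι) (η : Ordinal.{u}) (h : η < tauF c b) : ι :=
  ((Ordinal.enum ((· < ·) : ↥{a | memFcol c b a} → ↥{a | memFcol c b a} → Prop)) ⟨η, h⟩ :
    ↥{a | memFcol c b a}).val

theorem EF_mem (b : ι) (η : Ordinal) (h : η < tauF c b) : memFcol c b (EF c b η h) :=
  ((Ordinal.enum _) ⟨η, h⟩ : ↥{a | memFcol c b a}).property

theorem EF_lt_EF (b : ι) {η ζ : Ordinal} (hη : η < tauF c b) (hζ : ζ < tauF c b)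
    (h : ζ < η) : EF c b ζ hζ < EF c b η hη := by
  have := (Ordinal.enum_lt_enum
    (r := ((· < ·) : ↥{a | memFcol c b a} → ↥{a | memFcol c b a} → Prop))
    (o₁ := ⟨ζ, hζ⟩) (o₂ := ⟨η, hη⟩)).2 (by exact h)
  exact this

theorem EF_typein {b : ι} {a : ι} (ha : memFcol c b a) :
    ∃ (η : Ordinal) (h : η < tauF c b), EF c b η h = a := by
  refine ⟨Ordinal.typein _ (⟨a, ha⟩ : ↥{a | memFcol c b a}), Ordinal.typein_lt_type _ _, ?_⟩
  show (_ : ↥{a | memFcol c b a}).val = a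
  rw [Ordinal.enum_typein]

theorem EF_typein_lt {b : ι} {a : ι} (ha : memFcol c b a) {η : Ordinal} (hη : η < tauF c b)
    (hlt : a < EF c b η hη) :
    ∃ (ζ : Ordinal) (hζ : ζ < tauF c b), ζ < η ∧ EF c b ζ hζ = a := by
  set r := ((· < ·) : ↥{a | memFcol c b a} → ↥{a | memFcol c b a} → Prop)
  set x : ↥{a | memFcol c b a} := ⟨a, ha⟩
  refine ⟨Ordinal.typein r x, Ordinal.typein_lt_type r x, ?_, ?_⟩
  · have hxe : r x (Ordinal.enum r ⟨η, hη⟩) := hlt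
    have := (Ordinal.enum_lt_enum (r := r)
      (o₁ := ⟨Ordinal.typein r x, Ordinal.typein_lt_type r x⟩) (o₂ := ⟨η, hη⟩))
    rw [Ordinal.enum_typein] at this
    exact this.1 hxe
  · show (_ : ↥{a | memFcol c b a}).val = a
    rw [Ordinal.enum_typein]

/-- Minimality of `EF`. -/
theorem EF_minimal (b : ι) {η : Ordinal} (hη : η < tauF c b) (a : ι) (hab : a < b)
    (hcond : ∀ ζ (hζτ : ζ < tauF c b), ζ < η →
      EF c b ζ hζτ < a ∧ c (EF c b ζ hζτ) a = c (EF c b ζ hζτ) b) :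
    ¬ a < EF c b η hη := by
  intro hlt
  have hmem : memFcol c b a := by
    rw [memFcol_iff]
    refine ⟨hab, fun a' ha' hma' => ?_⟩
    obtain ⟨ζ, hζτ, hζη, hEa'⟩ := EF_typein_lt c hma' hη (ha'.trans hlt)
    rw [← hEa']
    exact (hcond ζ hζτ hζη).2
  obtain ⟨ζ, hζτ, hζη, hEa⟩ := EF_typein_lt c hmem hη hlt
  have := (hcond ζ hζτ hζη).1
  rw [hEa] at this
  exact lt_irrefl a this

theorem EF_eq {b₁ b₂ : ι} (hb : b₁ < b₂) (hτ : tauF c b₁ = tauF c b₂)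
    (hh : ∀ η (h₁ : η < tauF c b₁) (h₂ : η < tauF c b₂),
      c (EF c b₁ η h₁) b₁ = c (EF c b₂ η h₂) b₂) :
    ∀ η (h₁ : η < tauF c b₁) (h₂ : η < tauF c b₂), EF c b₁ η h₁ = EF c b₂ η h₂ := by
  intro η
  induction η using Ordinal.induction with
  | h η IH =>
    intro h₁ h₂
    rcases lt_trichotomy (EF c b₁ η h₁) (EF c b₂ η h₂) with hlt | heq | hgt
    · exfalso
      refine EF_minimal c b₂ h₂ (EF c b₁ η h₁) ((EF_mem c b₁ η h₁ |> memFcol_lt).trans hb)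
        (fun ζ hζτ₂ hζη => ?_) hlt
      have hζτ₁ : ζ < tauF c b₁ := hτ ▸ hζτ₂
      have hE := IH ζ hζη hζτ₁ hζτ₂
      constructor
      · rw [← hE]; exact EF_lt_EF c b₁ h₁ hζτ₁ hζη
      · have h1 : c (EF c b₁ ζ hζτ₁) (EF c b₁ η h₁) = c (EF c b₁ ζ hζτ₁) b₁ :=
          memFcol_color (EF_mem c b₁ η h₁) (EF_mem c b₁ ζ hζτ₁) (EF_lt_EF c b₁ h₁ hζτ₁ hζη)
        rw [← hE, h1, hh ζ hζτ₁ hζτ₂, ← hE]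
    · exact heq
    · exfalso
      refine EF_minimal c b₁ h₁ (EF c b₂ η h₂)
        (hgt.trans (memFcol_lt (EF_mem c b₁ η h₁)))
        (fun ζ hζτ₁ hζη => ?_) hgt
      have hζτ₂ : ζ < tauF c b₂ := hτ ▸ hζτ₁
      have hE := IH ζ hζη hζτ₁ hζτ₂
      constructor
      · rw [hE]; exact EF_lt_EF c b₂ h₂ hζτ₂ hζη
      · have h1 : c (EF c b₂ ζ hζτ₂) (EF c b₂ η h₂) = c (EF c b₂ ζ hζτ₂) b₂ :=
          memFcol_color (EF_mem c b₂ η h₂) (EF_mem c b₂ ζ hζτ₂) (EF_lt_EF c b₂ h₂ hζτ₂ hζη)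
        rw [hE, h1, ← hh ζ hζτ₁ hζτ₂, hE]

theorem EF_no_two {b₁ b₂ : ι} (hb : b₁ < b₂) (hτ : tauF c b₁ = tauF c b₂)
    (hh : ∀ η (h₁ : η < tauF c b₁) (h₂ : η < tauF c b₂),
      c (EF c b₁ η h₁) b₁ = c (EF c b₂ η h₂) b₂) : False := by
  have hsets : ∀ a, memFcol c b₂ a ↔ memFcol c b₁ a := by
    intro a
    constructor
    · intro ha
      obtain ⟨η, hη, hEa⟩ := EF_typein c ha
      rw [← hEa, ← EF_eq c hb hτ hh η (hτ ▸ hη) hη]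
      exact EF_mem c b₁ η _
    · intro ha
      obtain ⟨η, hη, hEa⟩ := EF_typein c ha
      rw [← hEa, EF_eq c hb hτ hh η hη (hτ ▸ hη)]
      exact EF_mem c b₂ η _
  have hmem : memFcol c b₂ b₁ := by
    rw [memFcol_iff]
    refine ⟨hb, fun a' ha' hma' => ?_⟩
    have hma1 : memFcol c b₁ a' := (hsets a').1 hma'
    obtain ⟨η, hη, hEa⟩ := EF_typein c hma1
    rw [← hEa, hh η hη (hτ ▸ hη), EF_eq c hb hτ hh η hη (hτ ▸ hη)]
  exact lt_irrefl b₁ (memFcol_lt ((hsets b₁).1 hmem))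

theorem exists_strictMono_of_infinite {M : Set ι} (hM : M.Infinite) :
    ∃ f : ℕ → ι, StrictMono f ∧ ∀ k, f k ∈ M := by
  set r := ((· < ·) : ↥M → ↥M → Prop)
  have homega : (Ordinal.omega0 : Ordinal.{u}) ≤ Ordinal.type r := by
    by_contra hlt
    push_neg at hlt
    obtain ⟨n, hn⟩ := Ordinal.lt_omega0.1 hlt
    have hcardeq : #↥M = n := by
      have := Ordinal.card_type r
      rw [hn] at this
      rw [← this, Ordinal.card_nat]
    have : Finite ↥M := by
      rw [← Cardinal.mk_lt_aleph0_iff]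
      rw [hcardeq]
      exact Cardinal.nat_lt_aleph0 n
    exact hM (Set.toFinite M) |>.elim
  refine ⟨fun k => ((Ordinal.enum r) ⟨(k : Ordinal), lt_of_lt_of_le (Ordinal.nat_lt_omega0 k) homega⟩ : ↥M).val, ?_, ?_⟩
  · intro k l hkl
    have := (Ordinal.enum_lt_enum (r := r)
      (o₁ := ⟨(k : Ordinal), lt_of_lt_of_le (Ordinal.nat_lt_omega0 k) homega⟩)
      (o₂ := ⟨(l : Ordinal), lt_of_lt_of_le (Ordinal.nat_lt_omega0 l) homega⟩)).2
      (Subtype.mk_lt_mk.2 (by exact_mod_cast hkl))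
    exact this
  · intro k
    exact ((Ordinal.enum r) _ : ↥M).property

theorem erdosRado_seq (hcard : (Cardinal.continuum : Cardinal.{u+1}) < Cardinal.lift.{u+1} #ι) :
    ∃ (f : ℕ → ι) (n : ℕ), StrictMono f ∧ ∀ k l, k < l → c (f k) (f l) = n := by
  by_cases hbig : ∃ b n, {a | memFcol c b a ∧ c a b = n}.Infinite
  · obtain ⟨b, n, hbn⟩ := hbig
    obtain ⟨f, hmono, hmem⟩ := exists_strictMono_of_infinite hbn
    refine ⟨f, n, hmono, fun k l hkl => ?_⟩
    have hk := hmem k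
    have hl := hmem l
    have := memFcol_color hl.1 hk.1 (hmono hkl)
    rw [this]
    exact hk.2
  · exfalso
    push_neg at hbig
    -- all greedy sets are countable, so the order types are `< ω₁`
    have hτω : ∀ b : ι, tauF c b < (Cardinal.aleph 1).ord := by
      intro b
      have hcount : ({a | memFcol c b a} : Set ι).Countable := by
        have : {a | memFcol c b a} = ⋃ n, {a | memFcol c b a ∧ c a b = n} := by
          ext a
          simp only [Set.mem_setOf_eq, Set.mem_iUnion]
          exact ⟨fun h => ⟨c a b, h, rfl⟩, fun ⟨n, h, _⟩ => h⟩
        rw [this]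
        exact Set.countable_iUnion fun n => (hbig b n).countable
      rw [Cardinal.lt_ord]
      calc (tauF c b).card = #↥{a | memFcol c b a} := Ordinal.card_type _
        _ ≤ ℵ₀ := hcount.le_aleph0
        _ < Cardinal.aleph 1 := Cardinal.aleph0_lt_aleph_one
    set T := Σ o : ↥(Set.Iio ((Cardinal.aleph 1).ord : Ordinal.{u})), (↥(Set.Iio o.val) → ℕ)
      with hT
    have sigma_inj : ∀ (o o' : ↥(Set.Iio ((Cardinal.aleph 1).ord : Ordinal.{u})))
        (H : ↥(Set.Iio o.val) → ℕ) (H' : ↥(Set.Iio o'.val) → ℕ),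
        (⟨o, H⟩ : T) = ⟨o', H'⟩ →
        o.val = o'.val ∧ ∀ η (h : η < o.val) (h' : η < o'.val), H ⟨η, h⟩ = H' ⟨η, h'⟩ := by
      intro o o' H H' heq
      cases heq
      exact ⟨rfl, fun η h h' => rfl⟩
    let Enc : ι → T := fun b =>
      ⟨⟨tauF c b, hτω b⟩, fun x => c (EF c b x.val x.property) b⟩
    have hinj : Function.Injective Enc := by
      intro b₁ b₂ h
      by_contra hne
      rcases lt_or_gt_of_ne hne with hlt | hgt
      · obtain ⟨hττ, hhist⟩ := sigma_inj _ _ _ _ h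
        exact EF_no_two c hlt hττ (fun η h₁ h₂ => hhist η h₁ h₂)
      · obtain ⟨hττ, hhist⟩ := sigma_inj _ _ _ _ h.symm
        exact EF_no_two c hgt hττ (fun η h₁ h₂ => hhist η h₁ h₂)
    -- counting
    have hTle : #T ≤ (Cardinal.continuum : Cardinal.{u+1}) := by
      have h1 : #T = Cardinal.sum
          (fun o : ↥(Set.Iio ((Cardinal.aleph 1).ord : Ordinal.{u})) =>
            #(↥(Set.Iio o.val) → ℕ)) := Cardinal.mk_sigma _
      rw [h1]
      have h2 : ∀ o : ↥(Set.Iio ((Cardinal.aleph 1).ord : Ordinal.{u})),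
          #(↥(Set.Iio o.val) → ℕ) ≤ Cardinal.continuum := by
        intro o
        have haux : ∀ κ : Cardinal.{u}, κ < Cardinal.aleph 1 → κ ≤ ℵ₀ := by
          intro κ hκ
          rwa [← Cardinal.succ_aleph0, Order.lt_succ_iff] at hκ
        have hA : #↥(Set.Iio o.val) ≤ (ℵ₀ : Cardinal.{u+1}) := by
          rw [Ordinal.mk_Iio_ordinal]
          have : o.val.card ≤ (ℵ₀ : Cardinal.{u}) := haux _ (Cardinal.lt_ord.1 o.property)
          calc Cardinal.lift.{u+1} o.val.card ≤ Cardinal.lift.{u+1} ℵ₀ :=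
                Cardinal.lift_le.2 this
            _ = ℵ₀ := Cardinal.lift_aleph0
        calc #(↥(Set.Iio o.val) → ℕ) = (ℵ₀ : Cardinal.{u+1}) ^ #↥(Set.Iio o.val) := by
              rw [Cardinal.mk_arrow]
              simp
          _ ≤ (ℵ₀ : Cardinal.{u+1}) ^ (ℵ₀ : Cardinal.{u+1}) :=
              Cardinal.power_le_power_left Cardinal.aleph0_ne_zero hA
          _ = 𝔠 := by rw [Cardinal.power_self_eq le_rfl, Cardinal.two_power_aleph0]
      calc Cardinal.sum (fun o : ↥(Set.Iio ((Cardinal.aleph 1).ord : Ordinal.{u})) =>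
            #(↥(Set.Iio o.val) → ℕ))
          ≤ Cardinal.sum (fun _ : ↥(Set.Iio ((Cardinal.aleph 1).ord : Ordinal.{u})) =>
            (Cardinal.continuum : Cardinal.{u+1})) := Cardinal.sum_le_sum _ _ h2
        _ = #↥(Set.Iio ((Cardinal.aleph 1).ord : Ordinal.{u})) * 𝔠 := Cardinal.sum_const' _ _
        _ ≤ 𝔠 * 𝔠 := by
            apply mul_le_mul_left
            rw [Ordinal.mk_Iio_ordinal, Cardinal.card_ord]
            rw [← Cardinal.lift_continuum.{u+1, u}]
            exact Cardinal.lift_le.2 Cardinal.aleph_one_le_continuum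
        _ = 𝔠 := Cardinal.mul_eq_self Cardinal.aleph0_le_continuum
    have hle : Cardinal.lift.{u+1} #ι ≤ #T := by
      have := Cardinal.lift_mk_le'.2 ⟨⟨Enc, hinj⟩⟩
      rwa [Cardinal.lift_id'.{u, u+1}] at this
    exact absurd (hcard.trans_le (hle.trans hTle)) (lt_irrefl _)

end ErdosRado

section Topo
open Set

universe t
variable {Θ : Ordinal.{t}}

theorem ordTop_orderTopology (Θ : Ordinal) :
    @OrderTopology {x : Ordinal // x < Θ} (ordTop Θ) _ := by
  letI := ordTop Θ
  exact ⟨rfl⟩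

/-- If `a` is not maximal, there is a "successor" point above `a`. -/
theorem exists_succ_point {a : {x : Ordinal // x < Θ}} (h : ∃ z : {x : Ordinal // x < Θ}, a < z) :
    ∃ σ : {x : Ordinal // x < Θ}, a < σ ∧ ∀ y : {x : Ordinal // x < Θ}, y < σ → y ≤ a := by
  obtain ⟨z, hz⟩ := h
  have hz' : a.val < z.val := hz
  refine ⟨⟨Order.succ a.val, lt_of_le_of_lt (Order.succ_le_of_lt hz') z.prop⟩, ?_, ?_⟩
  · change a.val < Order.succ a.val
    exact Order.lt_succ a.val
  · intro y hy
    have hy' : y.val < Order.succ a.val := hy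
    exact Subtype.coe_le_coe.1 (Order.lt_succ_iff.1 hy')

theorem derived_exists_lt {A : Set {x : Ordinal // x < Θ}} {a : {x : Ordinal // x < Θ}}
    (h : a ∈ @derivedSet _ (ordTop Θ) A) : ∃ β, β < a := by
  letI := ordTop Θ
  haveI : OrderTopology {x : Ordinal // x < Θ} := ordTop_orderTopology Θ
  by_contra hmin
  push_neg at hmin
  have h' := accPt_iff_nhds.1 (mem_derivedSet.1 h)
  by_cases hmax : ∃ z : {x : Ordinal // x < Θ}, a < z
  · obtain ⟨σ, haσ, hσ⟩ := exists_succ_point hmax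
    obtain ⟨y, ⟨hy1, _⟩, hy3⟩ := h' (Iio σ) ((isOpen_Iio).mem_nhds haσ)
    exact hy3 (le_antisymm (hσ y hy1) (hmin y))
  · push_neg at hmax
    obtain ⟨y, ⟨_, _⟩, hy3⟩ := h' univ Filter.univ_mem
    exact hy3 (le_antisymm (hmax y) (hmin y))

theorem derived_between {A : Set {x : Ordinal // x < Θ}} {a : {x : Ordinal // x < Θ}}
    (h : a ∈ @derivedSet _ (ordTop Θ) A) {β : {x : Ordinal // x < Θ}} (hβ : β < a) :
    ∃ x ∈ A, β < x ∧ x < a := by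
  letI := ordTop Θ
  haveI : OrderTopology {x : Ordinal // x < Θ} := ordTop_orderTopology Θ
  have h' := accPt_iff_nhds.1 (mem_derivedSet.1 h)
  by_cases hmax : ∃ z : {x : Ordinal // x < Θ}, a < z
  · obtain ⟨σ, haσ, hσ⟩ := exists_succ_point hmax
    obtain ⟨y, ⟨⟨hy1, hy2⟩, hyA⟩, hy3⟩ :=
      h' (Ioi β ∩ Iio σ) (((isOpen_Ioi).inter isOpen_Iio).mem_nhds ⟨hβ, haσ⟩)
    exact ⟨y, hyA, hy1, lt_of_le_of_ne (hσ y hy2) hy3⟩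
  · push_neg at hmax
    obtain ⟨y, ⟨hy1, hyA⟩, hy3⟩ := h' (Ioi β) ((isOpen_Ioi).mem_nhds hβ)
    exact ⟨y, hyA, hy1, lt_of_le_of_ne (hmax y) hy3⟩

theorem not_derived_bound {B : Set {x : Ordinal // x < Θ}} {a : {x : Ordinal // x < Θ}}
    (h : a ∉ @derivedSet _ (ordTop Θ) B) {β₀ : {x : Ordinal // x < Θ}} (hβ₀ : β₀ < a) :
    ∃ β, β < a ∧ ∀ x, x ∈ B → β < x → x < a → False := by
  letI := ordTop Θ
  haveI : OrderTopology {x : Ordinal // x < Θ} := ordTop_orderTopology Θ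
  rw [mem_derivedSet, accPt_iff_nhds] at h
  push_neg at h
  obtain ⟨U, hU, hUB⟩ := h
  obtain ⟨l, hl, hsub⟩ := exists_Ioc_subset_of_mem_nhds hU ⟨β₀, hβ₀⟩
  refine ⟨l, hl, fun x hxB hlx hxa => ?_⟩
  have hxa' := hUB x ⟨hsub ⟨hlx, hxa.le⟩, hxB⟩
  rw [hxa'] at hxa
  exact lt_irrefl a hxa

end Topo


instance : WellFoundedLT PIdx := by
  constructor
  have h : WellFounded fun a b : {i : Ordinal // i < (Order.succ (2 ^ Cardinal.aleph0) : Cardinal).ord} => a < b :=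
    wellFounded_lt
  exact h

open Cardinal in
theorem pidx_card.{v} : (Cardinal.continuum : Cardinal.{v+2}) < Cardinal.lift.{v+2, v+1} #(PIdx.{v}) := by
  have h1 : #(PIdx.{v}) = Cardinal.lift.{v+1} ((Order.succ (2 ^ Cardinal.aleph0) : Cardinal.{v}).ord).card :=
    Ordinal.mk_Iio_ordinal _
  rw [h1, Cardinal.card_ord, Cardinal.lift_lift, Cardinal.lift_succ]
  have h2 : Cardinal.lift.{v+2} (2 ^ Cardinal.aleph0 : Cardinal.{v}) = (Cardinal.continuum : Cardinal.{v+2}) := by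
    rw [Cardinal.two_power_aleph0, Cardinal.lift_continuum]
  rw [h2]
  exact Order.lt_succ _

theorem stmt_14 (Θ : Ordinal) (V : PIdx → Set {x : Ordinal // x < Θ})
    (α : {x : Ordinal // x < Θ}) :
    ¬ ∀ φ ∈ GammaSet, α ∈ @tsat PIdx _ (ordTop Θ) V φ := by
  intro H
  have h1 : ∀ i : PIdx, α ∈ @derivedSet _ (ordTop Θ) (V i) := fun i =>
    H (Fml.dia (Fml.var i)) (Or.inl ⟨i, rfl⟩)
  have h2 : ∀ i j : PIdx, i < j → α ∉ @derivedSet _ (ordTop Θ) (V i ∩ (@derivedSet _ (ordTop Θ) (V j))ᶜ) := by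
    intro i j hij hmem
    have hH := H _ (Or.inr ⟨i, j, hij, rfl⟩)
    simp only [Fml.box, Fml.neg, tsat, Set.union_empty, Set.compl_union, compl_compl] at hH
    exact hH hmem
  have hι0 : (0 : Ordinal) < (Order.succ (2 ^ Cardinal.aleph0) : Cardinal).ord := by
    rw [Cardinal.lt_ord]
    simpa using lt_of_le_of_lt (zero_le _) (Order.lt_succ (2 ^ Cardinal.aleph0 : Cardinal))
  obtain ⟨β₀, hβ₀⟩ := derived_exists_lt (h1 ⟨0, hι0⟩)
  have hBex : ∀ i j : PIdx, ∃ b : {x : Ordinal // x < Θ}, b < α ∧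
      (i < j → ∀ x, x ∈ V i → b < x → x < α → x ∈ @derivedSet _ (ordTop Θ) (V j)) := by
    intro i j
    by_cases hij : i < j
    · obtain ⟨β, hβα, hβ⟩ := not_derived_bound (h2 i j hij) hβ₀
      refine ⟨β, hβα, fun _ x hxV hbx hxα => ?_⟩
      by_contra hxd
      exact hβ x ⟨hxV, hxd⟩ hbx hxα
    · exact ⟨β₀, hβ₀, fun h => absurd h hij⟩
  choose B hBlt hBprop using hBex
  have final : ∀ f : ℕ → PIdx, StrictMono f → ∀ g : {x : Ordinal // x < Θ}, g < α →
      (∀ k l : ℕ, k < l → B (f k) (f l) ≤ g) → False := by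
    intro f hf g hg hB
    let lamS : ℕ → Set Ordinal := fun k => {v : Ordinal | ∃ hv : v < Θ,
      ((⟨v, hv⟩ : {x : Ordinal // x < Θ}) ∈ @derivedSet _ (ordTop Θ) (V (f k))) ∧
      g.val < v ∧ v ≤ α.val}
    let lam : ℕ → Ordinal := fun k => sInf (lamS k)
    have hne : ∀ k, (lamS k).Nonempty := by
      intro k
      have hmm : α.val ∈ lamS k := ⟨α.prop, by exact h1 (f k), hg, le_rfl⟩
      exact ⟨α.val, hmm⟩
    have hmemk : ∀ k : ℕ, ∃ hv : lam k < Θ,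
        ((⟨lam k, hv⟩ : {x : Ordinal // x < Θ}) ∈ @derivedSet _ (ordTop Θ) (V (f k))) ∧
        g.val < lam k ∧ lam k ≤ α.val := by
      intro k
      exact csInf_mem (s := lamS k) (hne k)
    have hdec : ∀ k, lam (k + 1) < lam k := by
      intro k
      obtain ⟨hvΘ, hvd, hgv, hvα⟩ := hmemk k
      have hgL : g < (⟨lam k, hvΘ⟩ : {x : Ordinal // x < Θ}) := hgv
      obtain ⟨x, hxV, hgx, hxL⟩ := derived_between hvd hgL
      have hxα : x < α :=
        lt_of_lt_of_le hxL (show (⟨lam k, hvΘ⟩ : {x : Ordinal // x < Θ}) ≤ α from hvα)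
      have hxd : x ∈ @derivedSet _ (ordTop Θ) (V (f (k + 1))) :=
        hBprop (f k) (f (k + 1)) (hf (Nat.lt_succ_self k)) x hxV
          (lt_of_le_of_lt (hB k (k + 1) (Nat.lt_succ_self k)) hgx) hxα
      have hxmem : x.val ∈ lamS (k + 1) := ⟨x.prop, by exact hxd, hgx, hxα.le⟩
      have hle : lam (k + 1) ≤ x.val := csInf_le' (s := lamS (k + 1)) hxmem
      exact lt_of_le_of_lt hle hxL
    have hrange : (Set.range lam).Nonempty := ⟨lam 0, 0, rfl⟩
    obtain ⟨k, hk⟩ := csInf_mem hrange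
    have hmem1 : lam (k + 1) ∈ Set.range lam := ⟨k + 1, rfl⟩
    exact absurd (lt_of_lt_of_le (hk ▸ hdec k) (csInf_le' (s := Set.range lam) hmem1))
      (lt_irrefl _)
  by_cases hcof : ∃ s : ℕ → Ordinal, (∀ n, s n < α.val) ∧ ∀ β : Ordinal, β < α.val → ∃ n, β ≤ s n
  · obtain ⟨s, hslt, hscof⟩ := hcof
    have hcol : ∀ i j : PIdx, ∃ n, (B i j).val ≤ s n := fun i j => hscof _ (hBlt i j)
    obtain ⟨f, n, hf, hmono⟩ := erdosRado_seq (fun i j => Nat.find (hcol i j)) pidx_card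
    refine final f hf ⟨s n, lt_trans (hslt n) α.prop⟩ (hslt n) ?_
    intro k l hkl
    have hv : (B (f k) (f l)).val ≤ s (Nat.find (hcol (f k) (f l))) := Nat.find_spec (hcol _ _)
    rw [hmono k l hkl] at hv
    exact hv
  · push_neg at hcof
    have hnat : ∀ k : ℕ, ((k : Ordinal) : Ordinal) < (Order.succ (2 ^ Cardinal.aleph0) : Cardinal).ord := by
      intro k
      rw [Cardinal.lt_ord]
      simp only [Ordinal.card_nat]
      exact lt_of_lt_of_le (Cardinal.nat_lt_aleph0 k)
        (le_trans (Cardinal.aleph0_le_continuum.trans_eq Cardinal.two_power_aleph0.symm)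
          (Order.le_succ _))
    set f : ℕ → PIdx := fun k => ⟨(k : Ordinal), hnat k⟩ with hfdef
    have hf : StrictMono f := by
      intro k l h
      show ((k : Ordinal)) < (l : Ordinal)
      exact_mod_cast h
    obtain ⟨β, hβα, hβ⟩ := hcof (fun m => (B (f (Nat.unpair m).1) (f (Nat.unpair m).2)).val)
      (fun m => hBlt _ _)
    refine final f hf ⟨β, lt_trans hβα α.prop⟩ hβα ?_
    intro k l hkl
    have := hβ (Nat.pair k l)
    rw [Nat.unpair_pair] at this
    exact le_of_lt this
end

section
/- In the Case-1 configuration: let α be a limit ordinal of countable cofinality with cofinal increasing sequence ⟨αₙ : n < ω⟩, and suppose M is a topological model on an ordinal Θ > α with the order topology such that M, α satisfies ◇pᵢ for all i < 𝔠⁺ and □(pᵢ → ◇pⱼ) for all i < j < 𝔠⁺. Then there is no uncountable S ⊆ 𝔠⁺ and n* < ω such that M, β ⊨ pᵢ → ◇pⱼ for all β ∈ (α_{n*}, α) and all i < j in S. (Equivalently, from such S one derives an infinite strictly decreasing sequence of ordinals, a contradiction.) -/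
theorem stmt_15 (Θ : Ordinal) (V : PIdx → Set {x : Ordinal // x < Θ})
    (α : {x : Ordinal // x < Θ}) (hα : Order.IsSuccLimit α.1) (hcf : α.1.cof = Cardinal.aleph0)
    (a : ℕ → Ordinal) (ha_mono : StrictMono a) (ha_lt : ∀ n, a n < α.1)
    (ha_cof : sSup (Set.range a) = α.1)
    (h1 : ∀ i : PIdx, α ∈ @tsat PIdx _ (ordTop Θ) V (Fml.dia (Fml.var i)))
    (h2 : ∀ i j : PIdx, i < j →
      α ∈ @tsat PIdx _ (ordTop Θ) V (Fml.box (Fml.imp (Fml.var i) (Fml.dia (Fml.var j))))) :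
    ¬ ∃ (S : Set PIdx) (nstar : ℕ), ¬ S.Countable ∧
      ∀ β : {x : Ordinal // x < Θ}, a nstar < β.1 → β.1 < α.1 →
        ∀ i ∈ S, ∀ j ∈ S, i < j →
          β ∈ @tsat PIdx _ (ordTop Θ) V (Fml.imp (Fml.var i) (Fml.dia (Fml.var j))) := by
  rintro ⟨S, nstar, hSc, hS⟩
  letI : TopologicalSpace {x : Ordinal // x < Θ} := ordTop Θ
  haveI : OrderTopology {x : Ordinal // x < Θ} := ⟨rfl⟩
  -- `Iic β` is open for every β ≤ α
  have hIic : ∀ β : {x : Ordinal // x < Θ}, IsOpen (Set.Iic β) := by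
    intro β
    rcases lt_or_eq_of_le (Order.succ_le_of_lt β.2) with h | h
    · have : Set.Iic β = Set.Iio (⟨Order.succ β.1, h⟩ : {x : Ordinal // x < Θ}) := by
        ext x
        rw [Set.mem_Iic, Set.mem_Iio, ← Subtype.coe_lt_coe, ← Subtype.coe_le_coe]
        exact (Order.lt_succ_iff).symm
      rw [this]; exact isOpen_Iio
    · have : Set.Iic β = Set.univ := by
        ext x
        simp only [Set.mem_Iic, Set.mem_univ, iff_true]
        exact Subtype.coe_le_coe.mp (Order.lt_succ_iff.mp (lt_of_lt_of_le x.2 h.symm.le))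
      rw [this]; exact isOpen_univ
  -- extracting a point of A strictly between lo and β from β ∈ derivedSet A
  have hmem : ∀ (A : Set {x : Ordinal // x < Θ}) (β lo : {x : Ordinal // x < Θ}),
      lo < β → β ∈ derivedSet A → ∃ γ, lo < γ ∧ γ < β ∧ γ ∈ A := by
    intro A β lo hlo hβ
    rw [mem_derivedSet, accPt_iff_nhds] at hβ
    obtain ⟨y, ⟨⟨hy1, hy2⟩, hyA⟩, hyne⟩ :=
      hβ (Set.Ioi lo ∩ Set.Iic β) (((isOpen_Ioi.inter (hIic β)).mem_nhds ⟨hlo, le_refl β⟩))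
    exact ⟨y, hy1, lt_of_le_of_ne hy2 hyne, hyA⟩
  -- a strictly monotone sequence in S
  have hSinf : S.Infinite := fun h => hSc h.countable
  haveI : WellFoundedLT PIdx :=
    inferInstanceAs (WellFoundedLT {i : Ordinal // i < (Order.succ (2 ^ Cardinal.aleph0) : Cardinal).ord})
  obtain ⟨f, hfmono, hfS⟩ : ∃ f : ℕ → PIdx, StrictMono f ∧ ∀ n, f n ∈ S := by
    have hwf : S.IsWF := Set.IsWF.of_wellFoundedLT S
    obtain ⟨g, hg⟩ := hwf.isPWO.exists_monotone_subseq
      (f := fun n => (hSinf.natEmbedding _ n : PIdx)) (fun n => (hSinf.natEmbedding _ n).2)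
    refine ⟨fun n => (hSinf.natEmbedding _ (g n) : PIdx), ?_, fun n => (hSinf.natEmbedding _ (g n)).2⟩
    have hmono : Monotone fun n => (hSinf.natEmbedding _ (g n) : PIdx) :=
      monotone_nat_of_le_succ fun n => hg (Nat.le_succ n)
    refine hmono.strictMono_of_injective ?_
    intro m n hmn
    exact g.injective ((hSinf.natEmbedding _).injective (Subtype.val_injective hmn))
  have hαΘ : α.1 < Θ := α.2
  set lo : {x : Ordinal // x < Θ} := ⟨a nstar, lt_trans (ha_lt nstar) hαΘ⟩ with hlo_def
  -- base point
  obtain ⟨β₀, hβ₀lo, hβ₀α, hβ₀V⟩ : ∃ β₀, lo < β₀ ∧ β₀ < α ∧ β₀ ∈ V (f 0) :=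
    hmem (V (f 0)) α lo (Subtype.coe_lt_coe.mp (ha_lt nstar)) (h1 (f 0))
  -- inductive step
  have main : ∀ (k : ℕ) (β : {x : Ordinal // x < Θ}), lo < β → β < α → β ∈ V (f k) →
      ∃ γ, lo < γ ∧ γ < β ∧ γ ∈ V (f (k + 1)) := by
    intro k β hloβ hβα hβV
    have := hS β (Subtype.coe_lt_coe.mpr hloβ) (Subtype.coe_lt_coe.mpr hβα)
      (f k) (hfS k) (f (k + 1)) (hfS (k + 1)) (hfmono (Nat.lt_succ_self k))
    rcases this with h | h
    · exact absurd hβV h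
    · exact hmem (V (f (k + 1))) β lo hloβ h
  choose! step hstep1 hstep2 hstep3 using main
  -- the decreasing sequence
  set b : ℕ → {x : Ordinal // x < Θ} := fun n => Nat.rec β₀ (fun k ih => step k ih) n with hb_def
  have hb0 : b 0 = β₀ := rfl
  have hbs : ∀ n, b (n + 1) = step n (b n) := fun n => rfl
  have inv : ∀ n, lo < b n ∧ b n < α ∧ b n ∈ V (f n) := by
    intro n
    induction n with
    | zero => exact ⟨hβ₀lo, hβ₀α, hβ₀V⟩
    | succ k ih =>
      obtain ⟨ih1, ih2, ih3⟩ := ih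
      refine ⟨hstep1 k (b k) ih1 ih2 ih3, ?_, hstep3 k (b k) ih1 ih2 ih3⟩
      exact lt_trans (hstep2 k (b k) ih1 ih2 ih3) ih2
  have hdec : ∀ n, (b (n + 1)).1 < (b n).1 := by
    intro n
    obtain ⟨ih1, ih2, ih3⟩ := inv n
    exact Subtype.coe_lt_coe.mpr (hstep2 n (b n) ih1 ih2 ih3)
  exact (RelEmbedding.wellFounded_iff_isEmpty.mp Ordinal.lt_wf).false
    (RelEmbedding.natGT (fun n => (b n).1) hdec)
end
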